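/- For the Inverse Gaussian PML objective, if γ is nonzero with z_i = x_iγ ≥ 0 for all i, then all three terms of dl(β + kγ)/dk = −α Σ_{y_i=0} exp(−x_iβ − k z_i) z_i + α Σ_{y_i>0} y_i exp(−2x_iβ − 2k z_i) z_i − α Σ_{y_i>0} exp(−x_iβ − k z_i) z_i tend to 0 as k → ∞, and the derivative is negative for all sufficiently large k whenever z_i > 0 for at least one observation with y_i > 0. -/

import Mathlib

open Filter Real

private lemma aux1 (a b c : ℝ) (hb : 0 < b) (hc : 0 ≤ c) :
    Filter.Tendsto (fun k : ℝ => Real.exp (a - b * k * c) * c)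
      Filter.atTop (nhds 0) := by
  rcases hc.eq_or_lt with h | h
  · simp [← h]
  · have h2 : Tendsto (fun k : ℝ => (b * c) * k) atTop atTop :=
      tendsto_id.const_mul_atTop (mul_pos hb h)
    have h3 : Tendsto (fun k : ℝ => a - b * k * c) atTop atBot := by
      have := tendsto_neg_atTop_atBot.comp h2
      have := tendsto_atBot_add_const_left atTop a this
      exact this.congr (fun k => by simp; ring)
    have := (Real.tendsto_exp_atBot.comp h3).mul_const c
    simpa using this

theorem stmt19 {N M : ℕ} (x : Fin N → Fin M → ℝ) (y : Fin N → ℝ) (α : ℝ)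
    (hα : 0 < α) (hy : ∀ i, 0 ≤ y i)
    (β γ : Fin M → ℝ) (hγ : γ ≠ 0)
    (z : Fin N → ℝ) (hz : ∀ i, z i = ∑ m, x i m * γ m)
    (hz0 : ∀ i, 0 ≤ z i) :
    (Filter.Tendsto (fun k : ℝ =>
        -α * ∑ i ∈ Finset.univ.filter (fun i => y i = 0),
          Real.exp (-(∑ m, x i m * β m) - k * z i) * z i)
      Filter.atTop (nhds 0)) ∧
    (Filter.Tendsto (fun k : ℝ =>
        α * ∑ i ∈ Finset.univ.filter (fun i => 0 < y i),
          y i * Real.exp (-2 * (∑ m, x i m * β m) - 2 * k * z i) * z i)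
      Filter.atTop (nhds 0)) ∧
    (Filter.Tendsto (fun k : ℝ =>
        -α * ∑ i ∈ Finset.univ.filter (fun i => 0 < y i),
          Real.exp (-(∑ m, x i m * β m) - k * z i) * z i)
      Filter.atTop (nhds 0)) ∧
    ((∃ i, 0 < y i ∧ 0 < z i) → ∃ K : ℝ, ∀ k : ℝ, K < k →
        (-α * ∑ i ∈ Finset.univ.filter (fun i => y i = 0),
            Real.exp (-(∑ m, x i m * β m) - k * z i) * z i)
        + (α * ∑ i ∈ Finset.univ.filter (fun i => 0 < y i),
            y i * Real.exp (-2 * (∑ m, x i m * β m) - 2 * k * z i) * z i)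
        + (-α * ∑ i ∈ Finset.univ.filter (fun i => 0 < y i),
            Real.exp (-(∑ m, x i m * β m) - k * z i) * z i) < 0) := by
  set s : Fin N → ℝ := fun i => ∑ m, x i m * β m with hs
  have hsum1 : ∀ (t : Finset (Fin N)), Tendsto (fun k : ℝ =>
      ∑ i ∈ t, Real.exp (-(s i) - k * z i) * z i) atTop (nhds 0) := by
    intro t
    have per : ∀ i : Fin N, Tendsto (fun k : ℝ => Real.exp (-(s i) - k * z i) * z i)
        atTop (nhds 0) := fun i =>
      (aux1 (-(s i)) 1 (z i) one_pos (hz0 i)).congr (fun k => by ring_nf)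
    have h := tendsto_finset_sum t (fun i (_ : i ∈ t) => per i)
    simpa using h
  have hsum2 : Tendsto (fun k : ℝ =>
      ∑ i ∈ Finset.univ.filter (fun i => 0 < y i),
        y i * Real.exp (-2 * s i - 2 * k * z i) * z i) atTop (nhds 0) := by
    have per : ∀ i : Fin N, Tendsto
        (fun k : ℝ => y i * Real.exp (-2 * s i - 2 * k * z i) * z i)
        atTop (nhds 0) := by
      intro i
      have h := (aux1 (-2 * s i) 2 (z i) two_pos (hz0 i)).const_mul (y i)
      rw [mul_zero] at h
      exact h.congr (fun k => by ring_nf)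
    have h := tendsto_finset_sum (Finset.univ.filter (fun i => 0 < y i))
      (fun i _ => per i)
    simpa using h
  refine ⟨?_, ?_, ?_, ?_⟩
  · simpa using ((hsum1 _).const_mul (-α))
  · simpa using (hsum2.const_mul α)
  · simpa using ((hsum1 _).const_mul (-α))
  · rintro ⟨i0, hyi0, hzi0⟩
    set S : Finset (Fin N) := Finset.univ.filter (fun i => 0 < y i ∧ 0 < z i) with hS
    have hi0S : i0 ∈ S := by simp [hS, hyi0, hzi0]
    have hSne : S.Nonempty := ⟨i0, hi0S⟩
    refine ⟨S.sup' hSne (fun i => (Real.log (y i) - s i) / z i), fun k hk => ?_⟩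
    have key : ∀ i, 0 < y i → 0 < z i →
        y i * Real.exp (-2 * s i - 2 * k * z i) < Real.exp (-(s i) - k * z i) := by
      intro i hy' hz'
      have hle : (Real.log (y i) - s i) / z i ≤ S.sup' hSne _ :=
        Finset.le_sup' (f := fun i => (Real.log (y i) - s i) / z i)
          (by simp [hS, hy', hz'])
      have h1 : Real.log (y i) - s i < k * z i := by
        have := lt_of_le_of_lt hle hk
        exact (div_lt_iff₀ hz').mp (lt_of_le_of_lt hle hk)
      calc y i * Real.exp (-2 * s i - 2 * k * z i)
          = Real.exp (Real.log (y i) + (-2 * s i - 2 * k * z i)) := by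
            rw [Real.exp_add, Real.exp_log hy']
        _ < Real.exp (-(s i) - k * z i) := Real.exp_lt_exp.mpr (by linarith)
    -- T0 ≤ 0
    have h0 : 0 ≤ ∑ i ∈ Finset.univ.filter (fun i => y i = 0),
        Real.exp (-(s i) - k * z i) * z i :=
      Finset.sum_nonneg fun i _ => mul_nonneg (Real.exp_pos _).le (hz0 i)
    have hT0 : -α * ∑ i ∈ Finset.univ.filter (fun i => y i = 0),
        Real.exp (-(s i) - k * z i) * z i ≤ 0 := by
      nlinarith [mul_nonneg hα.le h0]
    -- T2 + T3 < 0
    have hdiff : ∑ i ∈ Finset.univ.filter (fun i => 0 < y i),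
        (y i * Real.exp (-2 * s i - 2 * k * z i) * z i
          - Real.exp (-(s i) - k * z i) * z i) < 0 := by
      have := Finset.sum_lt_sum (s := Finset.univ.filter (fun i => 0 < y i))
        (f := fun i => y i * Real.exp (-2 * s i - 2 * k * z i) * z i
          - Real.exp (-(s i) - k * z i) * z i)
        (g := fun _ => (0 : ℝ))
        (fun i hi => by
          rcases (hz0 i).eq_or_lt with h | h
          · simp [← h]
          · have hyi : 0 < y i := (Finset.mem_filter.mp hi).2
            linarith [mul_lt_mul_of_pos_right (key i hyi h) h])
        ⟨i0, by simp [hyi0], by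
          simpa using mul_lt_mul_of_pos_right (key i0 hyi0 hzi0) hzi0⟩
      simpa using this
    have hsub : ∑ i ∈ Finset.univ.filter (fun i => 0 < y i),
        (y i * Real.exp (-2 * s i - 2 * k * z i) * z i
          - Real.exp (-(s i) - k * z i) * z i)
        = (∑ i ∈ Finset.univ.filter (fun i => 0 < y i),
            y i * Real.exp (-2 * s i - 2 * k * z i) * z i)
          - ∑ i ∈ Finset.univ.filter (fun i => 0 < y i),
            Real.exp (-(s i) - k * z i) * z i := Finset.sum_sub_distrib _ _
    rw [hsub] at hdiff
    nlinarith [mul_pos hα (neg_pos.mpr hdiff)]
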